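/- Define I(z) = ∫_0^∞ e^{-u} u^{-1/2} (1 + iu/(2z))^{-1/2} du for real z with 0 < z ≤ 1. Then |I(z)| ≤ C (z^{1/2} + z^{1/2} |log z|) for an absolute constant C. -/

import Mathlib

open MeasureTheory Set Real

lemma norm_eq (z u : ℝ) (hu : 0 < u) :
    ‖Complex.exp (-(u : ℂ)) * (u : ℂ) ^ (-(1:ℂ)/2) *
        (1 + Complex.I * (u : ℂ) / (2 * (z : ℂ))) ^ (-(1:ℂ)/2)‖
      = Real.exp (-u) * u ^ (-(1:ℝ)/2) *
        ‖(1 + Complex.I * (u : ℂ) / (2 * (z : ℂ)))‖ ^ (-(1:ℝ)/2) := by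
  have hw : (1 + Complex.I * (u : ℂ) / (2 * (z : ℂ))) ≠ 0 := by
    intro h
    have : (1 + Complex.I * (u : ℂ) / (2 * (z : ℂ))).re = 0 := by rw [h]; simp
    simp [Complex.add_re, Complex.div_re] at this
  rw [norm_mul, norm_mul]
  congr 1
  · congr 1
    · simp [Complex.norm_exp]
    · rw [Complex.norm_cpow_eq_rpow_re_of_pos hu]
      norm_num
  · rw [Complex.norm_cpow_of_ne_zero hw]
    norm_num

lemma re_im_w (z u : ℝ) (hz : z ≠ 0) :
    (1 + Complex.I * (u : ℂ) / (2 * (z : ℂ))).re = 1 ∧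
    (1 + Complex.I * (u : ℂ) / (2 * (z : ℂ))).im = u / (2*z) := by
  have h : Complex.I * (u : ℂ) / (2 * (z : ℂ)) = ((u/(2*z) : ℝ) : ℂ) * Complex.I := by
    push_cast
    field_simp
  rw [h]
  constructor <;> simp [Complex.div_re, Complex.div_im, Complex.normSq_apply] <;>
    field_simp <;> try ring

-- bound near zero
lemma bound_one (z u : ℝ) (hz : 0 < z) (hu : 0 < u) :
    ‖Complex.exp (-(u : ℂ)) * (u : ℂ) ^ (-(1:ℂ)/2) *
        (1 + Complex.I * (u : ℂ) / (2 * (z : ℂ))) ^ (-(1:ℂ)/2)‖ ≤ u ^ (-(1:ℝ)/2) := by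
  rw [norm_eq z u hu]
  have h1 : Real.exp (-u) ≤ 1 := by
    rw [Real.exp_le_one_iff]; linarith
  have h2 : (1:ℝ) ≤ ‖(1 + Complex.I * (u : ℂ) / (2 * (z : ℂ)))‖ := by
    have := Complex.abs_re_le_norm (1 + Complex.I * (u : ℂ) / (2 * (z : ℂ)))
    rw [(re_im_w z u hz.ne').1] at this
    simpa using this
  have h3 : ‖(1 + Complex.I * (u : ℂ) / (2 * (z : ℂ)))‖ ^ (-(1:ℝ)/2) ≤ 1 :=
    Real.rpow_le_one_of_one_le_of_nonpos h2 (by norm_num)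
  calc Real.exp (-u) * u ^ (-(1:ℝ)/2) *
        ‖(1 + Complex.I * (u : ℂ) / (2 * (z : ℂ)))‖ ^ (-(1:ℝ)/2)
      ≤ 1 * u ^ (-(1:ℝ)/2) * 1 := by
        apply mul_le_mul (mul_le_mul h1 le_rfl (Real.rpow_nonneg hu.le _) (by norm_num)) h3
          (Real.rpow_nonneg (norm_nonneg _) _)
        positivity
    _ = u ^ (-(1:ℝ)/2) := by ring

-- bound away from zero
lemma bound_two (z u : ℝ) (hz : 0 < z) (hu : 0 < u) :
    ‖Complex.exp (-(u : ℂ)) * (u : ℂ) ^ (-(1:ℂ)/2) *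
        (1 + Complex.I * (u : ℂ) / (2 * (z : ℂ))) ^ (-(1:ℂ)/2)‖ ≤
      Real.sqrt (2*z) * (Real.exp (-u) * u⁻¹) := by
  rw [norm_eq z u hu]
  have h2z : (0:ℝ) < 2*z := by linarith
  have habs : u/(2*z) ≤ ‖(1 + Complex.I * (u : ℂ) / (2 * (z : ℂ)))‖ := by
    have := Complex.abs_im_le_norm (1 + Complex.I * (u : ℂ) / (2 * (z : ℂ)))
    rw [(re_im_w z u hz.ne').2] at this
    calc u/(2*z) ≤ |u/(2*z)| := le_abs_self _
      _ ≤ _ := this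
  have h3 : ‖(1 + Complex.I * (u : ℂ) / (2 * (z : ℂ)))‖ ^ (-(1:ℝ)/2)
      ≤ (u/(2*z)) ^ (-(1:ℝ)/2) :=
    Real.rpow_le_rpow_of_nonpos (by positivity) habs (by norm_num)
  have h4 : (u/(2*z)) ^ (-(1:ℝ)/2) = Real.sqrt (2*z) * u ^ (-(1:ℝ)/2) := by
    rw [Real.div_rpow hu.le h2z.le, Real.sqrt_eq_rpow]
    rw [div_eq_mul_inv, ← Real.rpow_neg h2z.le]
    ring_nf
  calc Real.exp (-u) * u ^ (-(1:ℝ)/2) *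
        ‖(1 + Complex.I * (u : ℂ) / (2 * (z : ℂ)))‖ ^ (-(1:ℝ)/2)
      ≤ Real.exp (-u) * u ^ (-(1:ℝ)/2) * (Real.sqrt (2*z) * u ^ (-(1:ℝ)/2)) := by
        rw [← h4]
        exact mul_le_mul_of_nonneg_left h3 (by positivity)
    _ = Real.sqrt (2*z) * (Real.exp (-u) * (u ^ (-(1:ℝ)/2) * u ^ (-(1:ℝ)/2))) := by ring
    _ = Real.sqrt (2*z) * (Real.exp (-u) * u⁻¹) := by
        rw [← Real.rpow_add hu]
        norm_num [Real.rpow_neg_one]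

theorem stmt9 :
    ∃ C > 0, ∀ z : ℝ, 0 < z → z ≤ 1 →
      ‖∫ u in Set.Ioi (0:ℝ),
          Complex.exp (-(u : ℂ)) * (u : ℂ) ^ (-(1:ℂ)/2) *
            (1 + Complex.I * (u : ℂ) / (2 * (z : ℂ))) ^ (-(1:ℂ)/2)‖ ≤
        C * (z ^ ((1:ℝ)/2) + z ^ ((1:ℝ)/2) * |Real.log z|) := by
  refine ⟨4, by norm_num, fun z hz hz1 => ?_⟩
  set g : ℝ → ℝ := fun u =>
    Set.indicator (Set.Ioc 0 z) (fun u => u ^ (-(1:ℝ)/2)) u +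
      Real.sqrt (2*z) * (Set.indicator (Set.Ioc z 1) (fun u => u⁻¹) u +
        Set.indicator (Set.Ioi 1) (fun u => Real.exp (-u)) u) with hgdef
  -- integrability of the pieces
  have hi1 : IntegrableOn (fun u : ℝ => u ^ (-(1:ℝ)/2)) (Set.Ioc 0 z) := by
    have := intervalIntegral.intervalIntegrable_rpow' (a := 0) (b := z) (r := -(1:ℝ)/2) (by norm_num)
    rwa [intervalIntegrable_iff_integrableOn_Ioc_of_le hz.le] at this
  have hi2 : IntegrableOn (fun u : ℝ => u⁻¹) (Set.Ioc z 1) := by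
    apply IntegrableOn.mono_set _ Set.Ioc_subset_Icc_self
    apply ContinuousOn.integrableOn_compact' isCompact_Icc measurableSet_Icc
    exact ContinuousOn.inv₀ continuousOn_id fun x hx => by
      rcases hx with ⟨h1, _⟩; intro h0; rw [h0] at h1; linarith
  have hi3 : IntegrableOn (fun u : ℝ => Real.exp (-u)) (Set.Ioi 1) := by
    have h := exp_neg_integrableOn_Ioi (a := 1) (b := 1) one_pos
    have he : (fun x : ℝ => Real.exp (-1 * x)) = fun x => Real.exp (-x) := by
      funext x; norm_num
    rwa [he] at h
  have hg : Integrable g := by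
    apply Integrable.add
    · exact hi1.integrable_indicator measurableSet_Ioc
    · apply Integrable.const_mul
      exact (hi2.integrable_indicator measurableSet_Ioc).add
        (hi3.integrable_indicator measurableSet_Ioi)
  have hgnn : ∀ u, 0 ≤ g u := by
    intro u
    apply add_nonneg
    · exact Set.indicator_nonneg (fun a ha => Real.rpow_nonneg ha.1.le _) u
    · apply mul_nonneg (Real.sqrt_nonneg _)
      apply add_nonneg
      · exact Set.indicator_nonneg (fun a ha => inv_nonneg.mpr (hz.trans ha.1).le) u
      · exact Set.indicator_nonneg (fun a _ => (Real.exp_pos _).le) u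
  -- pointwise bound
  have hpt : ∀ u ∈ Set.Ioi (0:ℝ),
      ‖Complex.exp (-(u : ℂ)) * (u : ℂ) ^ (-(1:ℂ)/2) *
        (1 + Complex.I * (u : ℂ) / (2 * (z : ℂ))) ^ (-(1:ℂ)/2)‖ ≤ g u := by
    intro u hu
    simp only [Set.mem_Ioi] at hu
    rcases le_or_gt u z with h1 | h1
    · have hmem : Set.indicator (Set.Ioc 0 z) (fun u => u ^ (-(1:ℝ)/2)) u = u ^ (-(1:ℝ)/2) :=
        Set.indicator_of_mem (Set.mem_Ioc.mpr ⟨hu, h1⟩) _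
      simp only [hgdef, hmem]
      have := bound_one z u hz hu
      have hnn : 0 ≤ Real.sqrt (2*z) * (Set.indicator (Set.Ioc z 1) (fun u => u⁻¹) u +
          Set.indicator (Set.Ioi 1) (fun u => Real.exp (-u)) u) := by
        apply mul_nonneg (Real.sqrt_nonneg _)
        apply add_nonneg
        · exact Set.indicator_nonneg (fun a ha => inv_nonneg.mpr (hz.trans ha.1).le) u
        · exact Set.indicator_nonneg (fun a _ => (Real.exp_pos _).le) u
      linarith
    · have hb := bound_two z u hz hu
      have hind1 : Set.indicator (Set.Ioc 0 z) (fun u => u ^ (-(1:ℝ)/2)) u = 0 :=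
        Set.indicator_of_notMem (fun h => absurd h.2 (not_le.mpr h1)) _
      rcases le_or_gt u 1 with h2 | h2
      · -- z < u ≤ 1 : use 1/u piece
        have hind2 : Set.indicator (Set.Ioc z 1) (fun u => u⁻¹) u = u⁻¹ :=
          Set.indicator_of_mem (Set.mem_Ioc.mpr ⟨h1, h2⟩) _
        have h3 : Real.exp (-u) * u⁻¹ ≤ u⁻¹ := by
          apply mul_le_of_le_one_left (by positivity)
          rw [Real.exp_le_one_iff]; linarith
        have hnn3 : 0 ≤ Set.indicator (Set.Ioi 1) (fun u => Real.exp (-u)) u :=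
          Set.indicator_nonneg (fun a _ => (Real.exp_pos _).le) u
        simp only [hgdef, hind1, hind2]
        have hsq : 0 ≤ Real.sqrt (2*z) := Real.sqrt_nonneg _
        nlinarith [mul_le_mul_of_nonneg_left h3 hsq]
      · -- u > 1 : use exp piece
        have hind2 : Set.indicator (Set.Ioc z 1) (fun u => u⁻¹) u = 0 :=
          Set.indicator_of_notMem (fun h => absurd h.2 (not_le.mpr h2)) _
        have hind3 : Set.indicator (Set.Ioi 1) (fun u => Real.exp (-u)) u = Real.exp (-u) :=
          Set.indicator_of_mem (Set.mem_Ioi.mpr h2) _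
        have h3 : Real.exp (-u) * u⁻¹ ≤ Real.exp (-u) := by
          apply mul_le_of_le_one_right (Real.exp_pos _).le
          rw [inv_le_one_iff₀]; right; linarith
        simp only [hgdef, hind1, hind2, hind3]
        have hsq : 0 ≤ Real.sqrt (2*z) := Real.sqrt_nonneg _
        nlinarith [mul_le_mul_of_nonneg_left h3 hsq]
  -- the integral of g
  have hInt1 : ∫ u in Set.Ioc (0:ℝ) z, u ^ (-(1:ℝ)/2) = 2 * z ^ ((1:ℝ)/2) := by
    rw [← intervalIntegral.integral_of_le hz.le, integral_rpow (Or.inl (by norm_num))]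
    rw [Real.zero_rpow (by norm_num : -(1:ℝ)/2 + 1 ≠ 0)]
    norm_num
    ring
  have hInt2 : ∫ u in Set.Ioc z (1:ℝ), u⁻¹ = -Real.log z := by
    rw [← intervalIntegral.integral_of_le hz1, integral_inv_of_pos hz one_pos]
    rw [one_div, Real.log_inv]
  have hInt3 : ∫ u in Set.Ioi (1:ℝ), Real.exp (-u) = Real.exp (-1) := integral_exp_neg_Ioi 1
  have hIg : ∫ u, g u = 2 * z ^ ((1:ℝ)/2) +
      Real.sqrt (2*z) * (-Real.log z + Real.exp (-1)) := by
    have hA : Integrable (fun u : ℝ => Set.indicator (Set.Ioc 0 z) (fun u => u ^ (-(1:ℝ)/2)) u) :=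
      hi1.integrable_indicator measurableSet_Ioc
    have hB : Integrable (fun u : ℝ => Set.indicator (Set.Ioc z 1) (fun u => u⁻¹) u +
        Set.indicator (Set.Ioi 1) (fun u => Real.exp (-u)) u) :=
      (hi2.integrable_indicator measurableSet_Ioc).add
        (hi3.integrable_indicator measurableSet_Ioi)
    have hC : Integrable (fun u : ℝ => Real.sqrt (2*z) *
        (Set.indicator (Set.Ioc z 1) (fun u => u⁻¹) u +
          Set.indicator (Set.Ioi 1) (fun u => Real.exp (-u)) u)) := hB.const_mul _
    simp only [hgdef]
    rw [integral_add hA hC, integral_const_mul,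
      integral_add (hi2.integrable_indicator measurableSet_Ioc)
        (hi3.integrable_indicator measurableSet_Ioi)]
    rw [integral_indicator measurableSet_Ioc, integral_indicator measurableSet_Ioc,
      integral_indicator measurableSet_Ioi, hInt1, hInt2, hInt3]
  -- assemble
  calc ‖∫ u in Set.Ioi (0:ℝ),
          Complex.exp (-(u : ℂ)) * (u : ℂ) ^ (-(1:ℂ)/2) *
            (1 + Complex.I * (u : ℂ) / (2 * (z : ℂ))) ^ (-(1:ℂ)/2)‖
      ≤ ∫ u in Set.Ioi (0:ℝ), ‖Complex.exp (-(u : ℂ)) * (u : ℂ) ^ (-(1:ℂ)/2) *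
            (1 + Complex.I * (u : ℂ) / (2 * (z : ℂ))) ^ (-(1:ℂ)/2)‖ :=
        norm_integral_le_integral_norm _
    _ ≤ ∫ u in Set.Ioi (0:ℝ), g u := by
        apply integral_mono_of_nonneg (Filter.Eventually.of_forall fun u => norm_nonneg _)
          (hg.restrict)
        rw [Filter.EventuallyLE, ae_restrict_iff' measurableSet_Ioi]
        exact Filter.Eventually.of_forall hpt
    _ ≤ ∫ u, g u := setIntegral_le_integral hg (Filter.Eventually.of_forall hgnn)
    _ = 2 * z ^ ((1:ℝ)/2) + Real.sqrt (2*z) * (-Real.log z + Real.exp (-1)) := hIg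
    _ ≤ 4 * (z ^ ((1:ℝ)/2) + z ^ ((1:ℝ)/2) * |Real.log z|) := by
        have hlog : -Real.log z = |Real.log z| := by
          rw [abs_of_nonpos (Real.log_nonpos hz.le hz1)]
        have hsq : Real.sqrt (2*z) ≤ 2 * z ^ ((1:ℝ)/2) := by
          rw [show (2:ℝ)*z = 2*z by rfl, Real.sqrt_eq_rpow,
            Real.mul_rpow (by norm_num) hz.le]
          have : (2:ℝ) ^ ((1:ℝ)/2) ≤ 2 := by
            calc (2:ℝ) ^ ((1:ℝ)/2) ≤ 2 ^ (1:ℝ) :=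
              Real.rpow_le_rpow_of_exponent_le (by norm_num) (by norm_num)
            _ = 2 := Real.rpow_one 2
          nlinarith [Real.rpow_nonneg hz.le ((1:ℝ)/2)]
        have he : Real.exp (-1) ≤ 1 := by rw [Real.exp_le_one_iff]; norm_num
        have habs : 0 ≤ |Real.log z| := abs_nonneg _
        have hz12 : 0 ≤ z ^ ((1:ℝ)/2) := Real.rpow_nonneg hz.le _
        have hsqnn : 0 ≤ Real.sqrt (2*z) := Real.sqrt_nonneg _
        rw [hlog] at *
        nlinarith [mul_le_mul_of_nonneg_right hsq habs, mul_le_mul_of_nonneg_left he hsqnn]
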